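/- The string matcher structure forms a monoid: for a fixed target tg, the set of pairs (s, is) where s is a string and is is the sorted list of all good indices of s for tg, with identity ([], []) and operation (x, xis) <> (y, yis) = (x ++ y, xis ++ makeNewIndices x y tg ++ map (+ length x) yis), satisfies associativity and left/right identity. In particular, the operation is associative. -/

import Mathlib

/-- `subString o l s = take l (drop o s)` -/
def subString (o l : ℕ) (s : List Char) : List Char := (s.drop o).take l

/-- `i` is a good index of `s` for target `tg`. -/
def goodIndex (s tg : List Char) (i : ℕ) : Prop :=
  subString i tg.length s = tg ∧ i + tg.length ≤ s.length

instance (s tg : List Char) (i : ℕ) : Decidable (goodIndex s tg i) := by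
  unfold goodIndex; exact instDecidableAnd

/-- Collect all good indices of `s` for `tg` in the range `[lo, hi]`. -/
def makeIndices (s tg : List Char) (lo : ℕ) (hi : ℤ) : List ℕ :=
  if hi < lo then []
  else if goodIndex s tg lo then lo :: makeIndices s tg (lo + 1) hi
  else makeIndices s tg (lo + 1) hi
termination_by (hi + 1 - lo).toNat
decreasing_by all_goals (rename_i h _; omega)

def makeNewIndices (sl sr tg : List Char) : List ℕ :=
  if 2 ≤ tg.length then
    makeIndices (sl ++ sr) tg (max (sl.length - (tg.length - 1)) 0)
      ((sl.length : ℤ) - 1)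
  else []

/-- The string-matcher operation on pairs (string, index list). -/
def smOp (tg : List Char) (a b : List Char × List ℕ) : List Char × List ℕ :=
  (a.1 ++ b.1, a.2 ++ makeNewIndices a.1 b.1 tg ++ b.2.map (· + a.1.length))


theorem makeIndices_nil (s tg : List Char) (lo : ℕ) (hi : ℤ)
    (h : ∀ i, lo ≤ i → (i:ℤ) ≤ hi → ¬ goodIndex s tg i) :
    makeIndices s tg lo hi = [] := by
  unfold makeIndices
  by_cases hlt : hi < lo
  · simp [hlt]
  · rw [if_neg hlt, if_neg (h lo le_rfl (by omega)),
      makeIndices_nil s tg (lo+1) hi (fun i h1 h2 => h i (by omega) h2)]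
termination_by (hi + 1 - lo).toNat
decreasing_by omega

theorem makeIndices_congr (s s' tg : List Char) (lo : ℕ) (hi : ℤ)
    (h : ∀ i, lo ≤ i → (i:ℤ) ≤ hi → (goodIndex s tg i ↔ goodIndex s' tg i)) :
    makeIndices s tg lo hi = makeIndices s' tg lo hi := by
  unfold makeIndices
  by_cases hlt : hi < lo
  · simp [hlt]
  · have ih := makeIndices_congr s s' tg (lo+1) hi (fun i h1 h2 => h i (by omega) h2)
    have hg : goodIndex s tg lo ↔ goodIndex s' tg lo := h lo le_rfl (by omega)
    rw [if_neg hlt, if_neg hlt]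
    by_cases hgl : goodIndex s tg lo
    · rw [if_pos hgl, if_pos (hg.mp hgl), ih]
    · rw [if_neg hgl, if_neg (fun hh => hgl (hg.mpr hh)), ih]
termination_by (hi + 1 - lo).toNat
decreasing_by omega

theorem makeIndices_split (s tg : List Char) (lo m : ℕ) (hi : ℤ)
    (h1 : lo ≤ m) (h2 : (m:ℤ) ≤ hi + 1) :
    makeIndices s tg lo hi =
      makeIndices s tg lo ((m:ℤ) - 1) ++ makeIndices s tg m hi := by
  rcases eq_or_lt_of_le h1 with rfl | hlt
  · rw [show makeIndices s tg lo ((lo:ℤ)-1) = [] by unfold makeIndices; rw [if_pos (by omega)]]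
    simp
  · have ih := makeIndices_split s tg (lo+1) m hi (by omega) h2
    rw [makeIndices, if_neg (show ¬ hi < (lo:ℤ) by omega)]
    conv_rhs => rw [makeIndices]
    rw [if_neg (show ¬ (m:ℤ)-1 < (lo:ℤ) by omega), ih]
    by_cases hgl : goodIndex s tg lo <;> simp [hgl]
termination_by m - lo

theorem goodIndex_append_left (x y tg : List Char) (i : ℕ) (h : i + tg.length ≤ x.length) :
    (goodIndex (x++y) tg i ↔ goodIndex x tg i) := by
  unfold goodIndex subString
  rw [List.drop_append_of_le_length (by omega),
    List.take_append_of_le_length (by simp; omega)]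
  simp; omega

theorem goodIndex_append_right (x y tg : List Char) (i : ℕ) :
    goodIndex (x++y) tg (i + x.length) ↔ goodIndex y tg i := by
  unfold goodIndex subString
  rw [show i + x.length = x.length + i by omega, List.drop_append]
  simp [List.drop_eq_nil_of_le]; omega

theorem makeIndices_shift (x y tg : List Char) (lo : ℕ) (hi : ℤ) :
    makeIndices (x++y) tg (lo + x.length) hi =
      (makeIndices y tg lo (hi - x.length)).map (· + x.length) := by
  unfold makeIndices
  by_cases hlt : hi - x.length < lo
  · rw [if_pos (by push_cast; omega), if_pos hlt]; simp
  · have ih := makeIndices_shift x y tg (lo+1) hi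
    rw [if_neg (by push_cast; omega), if_neg hlt]
    by_cases hgl : goodIndex y tg lo
    · rw [if_pos ((goodIndex_append_right x y tg lo).mpr hgl),
        show lo + x.length + 1 = (lo + 1) + x.length by omega, ih]; simp [hgl]
    · rw [if_neg (fun hh => hgl ((goodIndex_append_right x y tg lo).mp hh)),
        show lo + x.length + 1 = (lo + 1) + x.length by omega, ih, if_neg hgl]
termination_by (hi + 1 - lo).toNat
decreasing_by omega

theorem mni_nil_left (x tg : List Char) : makeNewIndices [] x tg = [] := by
  unfold makeNewIndices
  split
  · exact makeIndices_nil _ _ _ _ (fun i h1 h2 => by simp at h2; omega)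
  · rfl

theorem mni_nil_right (x tg : List Char) : makeNewIndices x [] tg = [] := by
  unfold makeNewIndices
  split
  · rename_i h2
    refine makeIndices_nil _ _ _ _ (fun i h1 hi hg => ?_)
    have := hg.2
    simp at this
    have hA : max (x.length - (tg.length-1)) 0 = x.length - (tg.length-1) :=
      max_eq_left (Nat.zero_le _)
    rw [hA] at h1
    omega
  · rfl

theorem combine (x y tg : List Char) :
    makeIndices x tg 0 ((x.length:ℤ)-1) ++ makeNewIndices x y tg ++
      (makeIndices y tg 0 ((y.length:ℤ)-1)).map (· + x.length) =
    makeIndices (x++y) tg 0 (((x++y).length:ℤ)-1) := by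
  have hA : max (x.length - (tg.length-1)) 0 = x.length - (tg.length-1) :=
    max_eq_left (Nat.zero_le _)
  -- step 1: split whole at x.length
  have h1 : makeIndices (x++y) tg 0 (((x++y).length:ℤ)-1)
      = makeIndices (x++y) tg 0 ((x.length:ℤ)-1)
        ++ makeIndices (x++y) tg x.length (((x++y).length:ℤ)-1) :=
    makeIndices_split _ _ 0 x.length _ (by omega)
      (by simp only [List.length_append]; push_cast; omega)
  -- step 2: shift
  have h2 : makeIndices (x++y) tg x.length (((x++y).length:ℤ)-1)
      = (makeIndices y tg 0 ((y.length:ℤ)-1)).map (· + x.length) := by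
    have hs := makeIndices_shift x y tg 0 (((x++y).length:ℤ)-1)
    rw [show 0 + x.length = x.length from by omega,
      show ((x++y).length:ℤ)-1 - x.length = (y.length:ℤ)-1 from by
        simp only [List.length_append]; push_cast; ring] at hs
    exact hs
  -- step 3: split left part at A
  have h3 : makeIndices (x++y) tg 0 ((x.length:ℤ)-1)
      = makeIndices (x++y) tg 0 (((max (x.length - (tg.length-1)) 0 : ℕ) : ℤ)-1)
        ++ makeIndices (x++y) tg (max (x.length - (tg.length-1)) 0) ((x.length:ℤ)-1) :=
    makeIndices_split _ _ 0 (max (x.length - (tg.length-1)) 0) _ (by omega)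
      (by rw [hA]; omega)
  -- step 4: low part agrees with x
  have h4 : makeIndices (x++y) tg 0 (((max (x.length - (tg.length-1)) 0 : ℕ) : ℤ)-1)
      = makeIndices x tg 0 (((max (x.length - (tg.length-1)) 0 : ℕ) : ℤ)-1) := by
    refine makeIndices_congr _ _ _ _ _ (fun i hi1 hi2 => ?_)
    refine goodIndex_append_left x y tg i ?_
    rw [hA] at hi2
    omega
  -- step 5: indices of x stop at A
  have h5 : makeIndices x tg 0 ((x.length:ℤ)-1)
      = makeIndices x tg 0 (((max (x.length - (tg.length-1)) 0 : ℕ) : ℤ)-1)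
        ++ makeIndices x tg (max (x.length - (tg.length-1)) 0) ((x.length:ℤ)-1) :=
    makeIndices_split _ _ 0 (max (x.length - (tg.length-1)) 0) _ (by omega)
      (by rw [hA]; omega)
  have h5' : makeIndices x tg (max (x.length - (tg.length-1)) 0) ((x.length:ℤ)-1) = [] := by
    refine makeIndices_nil _ _ _ _ (fun i hi1 hi2 hg => ?_)
    have h2 := hg.2
    rw [hA] at hi1
    omega
  -- step 6: middle part is makeNewIndices
  have h6 : makeIndices (x++y) tg (max (x.length - (tg.length-1)) 0) ((x.length:ℤ)-1)
      = makeNewIndices x y tg := by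
    unfold makeNewIndices
    split
    · rfl
    · rename_i h2t
      rw [show max (x.length - (tg.length-1)) 0 = x.length from by omega,
        makeIndices, if_pos (by omega)]
  rw [h5, h5', List.append_nil, ← h4, ← h6, h1, h3, h2]


/-- String matchers (pairs satisfying the invariant that the index list is
exactly the list of all good indices) form a monoid: the operation is
associative and `([], [])` is a left and right identity. -/
theorem sm_monoid (tg : List Char) (x y z : List Char) (xis yis zis : List ℕ)
    (hx : xis = makeIndices x tg 0 ((x.length : ℤ) - 1))
    (hy : yis = makeIndices y tg 0 ((y.length : ℤ) - 1))
    (hz : zis = makeIndices z tg 0 ((z.length : ℤ) - 1)) :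
    smOp tg (x, xis) (smOp tg (y, yis) (z, zis)) =
        smOp tg (smOp tg (x, xis) (y, yis)) (z, zis)
      ∧ smOp tg ([], []) (x, xis) = (x, xis)
      ∧ smOp tg (x, xis) ([], []) = (x, xis) := by
  subst hx hy hz
  refine ⟨?_, ?_, ?_⟩
  · unfold smOp
    simp only
    rw [Prod.mk.injEq]
    refine ⟨(List.append_assoc x y z).symm, ?_⟩
    rw [combine y z tg, combine x (y++z) tg, combine x y tg, combine (x++y) z tg,
      ← List.append_assoc x y z]
  · unfold smOp
    simp [mni_nil_left]
  · unfold smOp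
    simp [mni_nil_right]
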